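/- Let Φ : P → P be a linear shift, i.e. the K-algebra homomorphism determined by Φ(xᵢ) = aᵢxᵢ + bᵢ with aᵢ ∈ K ∖ {0} and bᵢ ∈ K for i = 1,…,n. Then for every monomial order σ and every nonzero polynomial f ∈ P, the polynomial Φ(f) is nonzero and LM_σ(Φ(f)) = LM_σ(f). -/

import Mathlib

open MvPolynomial

/-- The leading monomial (σ-largest exponent vector in the support) of a polynomial. -/
noncomputable def leadMonomial {n : ℕ} {K : Type*} [Field K]
    (m : MonomialOrder (Fin n)) (f : MvPolynomial (Fin n) K) : Fin n →₀ ℕ :=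
  m.toSyn.symm (f.support.sup fun s => m.toSyn s)


section aux

variable {n : ℕ} {K : Type*} [Field K]

/-- bounded support + nonzero top coefficient is multiplicative. -/
lemma mul_bound_coeff (p q : MvPolynomial (Fin n) K) (s t : Fin n →₀ ℕ)
    (hp : ∀ u ∈ p.support, u ≤ s) (hq : ∀ v ∈ q.support, v ≤ t) :
    (∀ w ∈ (p * q).support, w ≤ s + t) ∧
      MvPolynomial.coeff (s + t) (p * q) = MvPolynomial.coeff s p * MvPolynomial.coeff t q := by
  constructor
  · intro w hw
    have := MvPolynomial.support_mul p q hw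
    rw [Finset.mem_add] at this
    obtain ⟨u, hu, v, hv, rfl⟩ := this
    exact add_le_add (hp u hu) (hq v hv)
  · rw [MvPolynomial.coeff_mul]
    rw [Finset.sum_eq_single_of_mem (s, t) (Finset.HasAntidiagonal.mem_antidiagonal.mpr rfl)]
    · intro c hc hne
      rw [Finset.HasAntidiagonal.mem_antidiagonal] at hc
      by_contra h
      have hc1 : MvPolynomial.coeff c.1 p ≠ 0 := fun h0 => h (by rw [h0, zero_mul])
      have hc2 : MvPolynomial.coeff c.2 q ≠ 0 := fun h0 => h (by rw [h0, mul_zero])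
      have h1 : c.1 ≤ s := hp _ (by rwa [MvPolynomial.mem_support_iff])
      have h2 : c.2 ≤ t := hq _ (by rwa [MvPolynomial.mem_support_iff])
      have : c.1 = s ∧ c.2 = t := by
        constructor
        · by_contra hne1
          have : c.1 + c.2 < s + t :=
            add_lt_add_of_lt_of_le (lt_of_le_of_ne h1 hne1) h2
          rw [hc] at this
          exact lt_irrefl _ this
        · by_contra hne2
          have : c.1 + c.2 < s + t :=
            add_lt_add_of_le_of_lt h1 (lt_of_le_of_ne h2 hne2)
          rw [hc] at this
          exact lt_irrefl _ this
      exact hne (Prod.ext this.1 this.2)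

lemma base_bound (a b : K) (i : Fin n) :
    (∀ u ∈ (C a * X i + C b : MvPolynomial (Fin n) K).support, u ≤ Finsupp.single i 1) ∧
      MvPolynomial.coeff (Finsupp.single i 1) (C a * X i + C b : MvPolynomial (Fin n) K) = a := by
  constructor
  · intro u hu
    classical
    rw [MvPolynomial.mem_support_iff, MvPolynomial.coeff_add, MvPolynomial.coeff_C_mul,
      MvPolynomial.coeff_X', MvPolynomial.coeff_C] at hu
    by_cases h1 : Finsupp.single i 1 = u
    · exact le_of_eq h1.symm
    · by_cases h2 : u = 0
      · exact h2 ▸ zero_le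
      · rw [if_neg h1, if_neg (Ne.symm h2)] at hu
        simp at hu
  · classical
    rw [MvPolynomial.coeff_add, MvPolynomial.coeff_C_mul, MvPolynomial.coeff_X',
      MvPolynomial.coeff_C]
    have h0 : ¬ ((0 : Fin n →₀ ℕ) = Finsupp.single i 1) := by
      intro h
      have := Finsupp.single_eq_zero.mp h.symm
      exact one_ne_zero this
    rw [if_pos rfl, if_neg h0, mul_one, add_zero]

lemma pow_bound (a b : K) (ha : a ≠ 0) (i : Fin n) (e : ℕ) :
    (∀ u ∈ ((C a * X i + C b : MvPolynomial (Fin n) K) ^ e).support, u ≤ Finsupp.single i e) ∧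
      MvPolynomial.coeff (Finsupp.single i e) ((C a * X i + C b : MvPolynomial (Fin n) K) ^ e)
        ≠ 0 := by
  induction e with
  | zero =>
    constructor
    · intro u hu
      classical
      rw [pow_zero, MvPolynomial.mem_support_iff, MvPolynomial.coeff_one] at hu
      by_cases h : (0 : Fin n →₀ ℕ) = u
      · exact h ▸ le_of_eq (Finsupp.single_zero i).symm
      · rw [if_neg h] at hu; exact absurd rfl hu
    · rw [pow_zero, MvPolynomial.coeff_one]
      simp
  | succ e ih =>
    have hsingle : Finsupp.single i (e + 1) = Finsupp.single i e + Finsupp.single i 1 := by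
      rw [← Finsupp.single_add]
    have := mul_bound_coeff ((C a * X i + C b : MvPolynomial (Fin n) K) ^ e)
      (C a * X i + C b) (Finsupp.single i e) (Finsupp.single i 1) ih.1 (base_bound a b i).1
    rw [pow_succ]
    constructor
    · intro u hu
      rw [hsingle]
      exact this.1 u hu
    · rw [hsingle, this.2, (base_bound a b i).2]
      exact mul_ne_zero ih.2 ha

lemma prod_bound (a b : Fin n → K) (ha : ∀ i, a i ≠ 0) (s : Fin n →₀ ℕ) :
    (∀ u ∈ (s.prod fun i e => (C (a i) * X i + C (b i) : MvPolynomial (Fin n) K) ^ e).support,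
        u ≤ s) ∧
      MvPolynomial.coeff s
        (s.prod fun i e => (C (a i) * X i + C (b i) : MvPolynomial (Fin n) K) ^ e) ≠ 0 := by
  induction s using Finsupp.induction with
  | zero =>
    constructor
    · intro u hu
      classical
      rw [Finsupp.prod_zero_index, MvPolynomial.mem_support_iff, MvPolynomial.coeff_one] at hu
      by_cases h : (0 : Fin n →₀ ℕ) = u
      · exact le_of_eq h.symm
      · rw [if_neg h] at hu; exact absurd rfl hu
    · rw [Finsupp.prod_zero_index, MvPolynomial.coeff_one]
      simp
  | single_add i c s hi hc ih =>
    have hprod : ((Finsupp.single i c + s).prod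
        fun i e => (C (a i) * X i + C (b i) : MvPolynomial (Fin n) K) ^ e) =
        ((C (a i) * X i + C (b i) : MvPolynomial (Fin n) K) ^ c) *
        (s.prod fun i e => (C (a i) * X i + C (b i) : MvPolynomial (Fin n) K) ^ e) := by
      rw [Finsupp.prod_add_index' (fun i => pow_zero _) (fun i e e' => pow_add _ e e'),
        Finsupp.prod_single_index (h := fun j e => (C (a j) * X j + C (b j) : MvPolynomial (Fin n) K) ^ e) (pow_zero _)]
    have hb := pow_bound (a i) (b i) (ha i) i c
    have := mul_bound_coeff _ _ _ _ hb.1 ih.1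
    rw [hprod]
    exact ⟨this.1, by rw [this.2]; exact mul_ne_zero hb.2 ih.2⟩

end aux

theorem linear_shift_preserves_leading_monomial
    {n : ℕ} {K : Type*} [Field K] (a b : Fin n → K) (ha : ∀ i, a i ≠ 0)
    (Φ : MvPolynomial (Fin n) K →ₐ[K] MvPolynomial (Fin n) K)
    (hΦ : ∀ i, Φ (X i) = C (a i) * X i + C (b i))
    (m : MonomialOrder (Fin n)) (f : MvPolynomial (Fin n) K) (hf : f ≠ 0) :
    Φ f ≠ 0 ∧ leadMonomial m (Φ f) = leadMonomial m f := by
  classical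
  have hsne : f.support.Nonempty := by rwa [MvPolynomial.support_nonempty]
  obtain ⟨d, hd, hsup⟩ := Finset.exists_mem_eq_sup f.support hsne (fun s => m.toSyn s)
  have hlead : leadMonomial m f = d := by
    rw [leadMonomial, hsup]; exact m.toSyn.symm_apply_apply d
  set P : (Fin n →₀ ℕ) → MvPolynomial (Fin n) K :=
    fun s => s.prod fun i e => (C (a i) * X i + C (b i)) ^ e with hP
  have hΦm : ∀ (s : Fin n →₀ ℕ) (c : K), Φ (monomial s c) = C c * P s := by
    intro s c
    rw [MvPolynomial.monomial_eq, map_mul]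
    have h1 : Φ (C c) = C c := by
      rw [← MvPolynomial.algebraMap_eq, AlgHom.commutes]
    rw [h1, map_finsuppProd]
    simp only [map_pow, hΦ, hP]
  have hΦf : Φ f = ∑ s ∈ f.support, C (coeff s f) * P s := by
    conv_lhs => rw [← f.support_sum_monomial_coeff]
    rw [map_sum]
    exact Finset.sum_congr rfl fun s _ => hΦm s _
  have hcoeff : ∀ u, coeff u (Φ f) = ∑ s ∈ f.support, coeff s f * coeff u (P s) := by
    intro u
    rw [hΦf, MvPolynomial.coeff_sum]
    exact Finset.sum_congr rfl fun s _ => MvPolynomial.coeff_C_mul _ _ _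
  have hcd : coeff d (Φ f) = coeff d f * coeff d (P d) := by
    rw [hcoeff]
    apply Finset.sum_eq_single_of_mem d hd
    intro s hs hne
    by_contra h
    have hds : d ≤ s := (prod_bound a b ha s).1 d
      (MvPolynomial.mem_support_iff.mpr fun h0 => h (by rw [h0, mul_zero]))
    have h1 : m.toSyn d ≤ m.toSyn s := m.toSyn_monotone hds
    have h2 : m.toSyn s ≤ m.toSyn d := hsup ▸ Finset.le_sup hs
    exact hne (m.toSyn.injective (le_antisymm h2 h1))
  have hne0 : coeff d (Φ f) ≠ 0 := by
    rw [hcd]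
    exact mul_ne_zero (MvPolynomial.mem_support_iff.mp hd) (prod_bound a b ha d).2
  have hΦne : Φ f ≠ 0 := fun h => hne0 (by rw [h]; simp)
  refine ⟨hΦne, ?_⟩
  rw [hlead, leadMonomial]
  have hkey : (Φ f).support.sup (fun s => m.toSyn s) = m.toSyn d := by
    apply le_antisymm
    · apply Finset.sup_le
      intro u hu
      have hu' : coeff u (Φ f) ≠ 0 := MvPolynomial.mem_support_iff.mp hu
      rw [hcoeff] at hu'
      obtain ⟨s, hs, hterm⟩ := Finset.exists_ne_zero_of_sum_ne_zero hu'
      have hus : u ≤ s := (prod_bound a b ha s).1 u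
        (MvPolynomial.mem_support_iff.mpr fun h0 => hterm (by rw [h0, mul_zero]))
      exact le_trans (m.toSyn_monotone hus) (hsup ▸ Finset.le_sup hs)
    · exact Finset.le_sup (MvPolynomial.mem_support_iff.mpr hne0)
  rw [hkey]
  exact m.toSyn.symm_apply_apply d
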